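/- If P is a nonzero sdf-absorbing C-hyperideal of a commutative multiplicative hyperring H, then rad(P) = P. -/
import Mathlib


open Pointwise

/-- A commutative multiplicative hyperring structure on an abelian group `H`. -/
structure MulHyperring (H : Type*) [AddCommGroup H] where
  hmul : H → H → Set H
  hmul_nonempty : ∀ x y : H, (hmul x y).Nonempty
  hmul_comm : ∀ x y : H, hmul x y = hmul y x
  hmul_assoc : ∀ x y z : H, (⋃ a ∈ hmul y z, hmul x a) = ⋃ b ∈ hmul x y, hmul b z
  hmul_distrib : ∀ x y z : H, hmul x (y + z) ⊆ hmul x y + hmul x z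
  hmul_neg : ∀ x y : H, hmul x (-y) = -(hmul x y)

namespace Hyper

variable {H : Type*} [AddCommGroup H] (mul : H → H → Set H)

/-- `P` is a hyperideal. -/
def IsIdeal (P : Set H) : Prop :=
  (0 : H) ∈ P ∧ (∀ x ∈ P, ∀ y ∈ P, x - y ∈ P) ∧ ∀ r : H, ∀ x ∈ P, mul r x ⊆ P

/-- Hyperproduct `a ∘ b₁ ∘ ⋯ ∘ bₙ`. -/
def hprod : H → List H → Set H
  | a, [] => {a}
  | a, b :: l => ⋃ t ∈ mul a b, hprod t l

/-- `C` is a finite hyperproduct `c₁ ∘ ⋯ ∘ cₙ`. -/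
def IsProduct (C : Set H) : Prop := ∃ (a : H) (l : List H), C = hprod mul a l

/-- `D` is a finite (nonempty) sum of finite hyperproducts. -/
def IsSum (D : Set H) : Prop :=
  ∃ L : List (Set H), L ≠ [] ∧ (∀ C ∈ L, IsProduct mul C) ∧ D = L.sum

/-- `P` is a `𝒞`-hyperideal. -/
def IsCIdeal (P : Set H) : Prop :=
  IsIdeal mul P ∧ ∀ C : Set H, IsProduct mul C → (C ∩ P).Nonempty → C ⊆ P

/-- `P` is a strong `𝒞`-hyperideal. -/
def IsStrongCIdeal (P : Set H) : Prop :=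
  IsIdeal mul P ∧ ∀ D : Set H, IsSum mul D → (D ∩ P).Nonempty → D ⊆ P

/-- The hypersquare `x² = x ∘ x`. -/
def sq (x : H) : Set H := mul x x

/-- `P` is an sdf-absorbing hyperideal. -/
def IsSdf (P : Set H) : Prop :=
  IsIdeal mul P ∧ P ≠ Set.univ ∧
    ∀ x y : H, x ≠ 0 → y ≠ 0 → sq mul x - sq mul y ⊆ P → x - y ∈ P ∨ x + y ∈ P

/-- `P` is a weakly sdf-absorbing hyperideal. -/
def IsWeaklySdf (P : Set H) : Prop :=
  IsIdeal mul P ∧ P ≠ Set.univ ∧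
    ∀ x y : H, x ≠ 0 → y ≠ 0 → (0 : H) ∉ sq mul x - sq mul y →
      sq mul x - sq mul y ⊆ P → x - y ∈ P ∨ x + y ∈ P

/-- `P` is a prime hyperideal. -/
def IsPrime (P : Set H) : Prop :=
  IsIdeal mul P ∧ P ≠ Set.univ ∧ ∀ x y : H, mul x y ⊆ P → x ∈ P ∨ y ∈ P

/-- The radical: intersection of the prime hyperideals containing `P`. -/
def rad (P : Set H) : Set H := ⋂₀ {Q : Set H | IsPrime mul Q ∧ P ⊆ Q}

/-- `hpow mul x n` is the hyperpower `x^(n+1)`. -/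
def hpow (x : H) (n : ℕ) : Set H := hprod mul x (List.replicate n x)

/-- `x` is nilpotent: `0 ∈ xⁿ` for some `n`. -/
def IsNilpotent (x : H) : Prop := ∃ n : ℕ, (0 : H) ∈ hpow mul x n

/-- `x` is a regular element: `x ∈ x² ∘ y` for some `y`. -/
def IsRegularElem (x : H) : Prop := ∃ y : H, x ∈ ⋃ t ∈ sq mul x, mul t y

/-- The hyperideal generated by a set `S`. -/
def span (S : Set H) : Set H := ⋂₀ {Q : Set H | IsIdeal mul Q ∧ S ⊆ Q}

/-- `P` is a maximal hyperideal. -/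
def IsMaximal (P : Set H) : Prop :=
  IsIdeal mul P ∧ P ≠ Set.univ ∧
    ∀ B : Set H, IsIdeal mul B → P ⊆ B → B = P ∨ B = Set.univ

end Hyper

/-- Componentwise hypermultiplication on a product. -/
def prodMul {H₁ H₂ : Type*} (m₁ : H₁ → H₁ → Set H₁) (m₂ : H₂ → H₂ → Set H₂) :
    H₁ × H₂ → H₁ × H₂ → Set (H₁ × H₂) :=
  fun a b => (m₁ a.1 b.1) ×ˢ (m₂ a.2 b.2)

section Aux

open Hyper

variable {H : Type*} [AddCommGroup H] (M : MulHyperring H)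

lemma aux_assoc_mem (c a b v : H) :
    (∃ r ∈ M.hmul a b, v ∈ M.hmul c r) ↔ ∃ s ∈ M.hmul c a, v ∈ M.hmul s b := by
  have h := M.hmul_assoc c a b
  rw [Set.ext_iff] at h
  simpa using h v

lemma hprod_append (a : H) (l₁ l₂ : List H) :
    hprod M.hmul a (l₁ ++ l₂) = ⋃ t ∈ hprod M.hmul a l₁, hprod M.hmul t l₂ := by
  induction l₁ generalizing a with
  | nil => simp [hprod]
  | cons b l ih =>
    show hprod M.hmul a (b :: (l ++ l₂)) = _
    ext u
    simp only [hprod, Set.mem_iUnion, ih]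
    constructor
    · rintro ⟨t, ht, s, hs, hu⟩; exact ⟨s, ⟨t, ht, hs⟩, hu⟩
    · rintro ⟨s, ⟨t, ht, hs⟩, hu⟩; exact ⟨t, ht, s, hs, hu⟩

lemma mul_hprod (c a : H) (l : List H) :
    (⋃ t ∈ hprod M.hmul a l, M.hmul c t) = ⋃ s ∈ M.hmul c a, hprod M.hmul s l := by
  induction l generalizing a with
  | nil => simp [hprod]
  | cons b l ih =>
    ext u
    simp only [hprod, Set.mem_iUnion]
    constructor
    · rintro ⟨t, ⟨r, hr, ht⟩, hu⟩
      -- t ∈ hprod r l, hu : u ∈ mul c t ; use ih at r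
      have : u ∈ ⋃ s ∈ M.hmul c r, hprod M.hmul s l := by
        rw [← ih]; exact Set.mem_biUnion ht hu
      simp only [Set.mem_iUnion] at this
      obtain ⟨s, hs, hu'⟩ := this
      obtain ⟨w, hw, hsw⟩ := (aux_assoc_mem M c a b s).mp ⟨r, hr, hs⟩
      exact ⟨w, hw, s, hsw, hu'⟩
    · rintro ⟨w, hw, s, hsw, hu⟩
      obtain ⟨r, hr, hs⟩ := (aux_assoc_mem M c a b s).mpr ⟨w, hw, hsw⟩
      have : u ∈ ⋃ s ∈ M.hmul c r, hprod M.hmul s l := by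
        simp only [Set.mem_iUnion]; exact ⟨s, hs, hu⟩
      rw [← ih] at this
      simp only [Set.mem_iUnion] at this
      obtain ⟨t, ht, hu'⟩ := this
      exact ⟨t, ⟨r, hr, ht⟩, hu'⟩

lemma hprod_nonempty (a : H) (l : List H) : (hprod M.hmul a l).Nonempty := by
  induction l generalizing a with
  | nil => exact ⟨a, rfl⟩
  | cons b l ih =>
    obtain ⟨t, ht⟩ := M.hmul_nonempty a b
    obtain ⟨u, hu⟩ := ih t
    exact ⟨u, Set.mem_biUnion ht hu⟩

lemma mul_pow_subset {x t₁ t₂ : H} {m k : ℕ}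
    (h₁ : t₁ ∈ hpow M.hmul x m) (h₂ : t₂ ∈ hpow M.hmul x k) :
    M.hmul t₁ t₂ ⊆ hpow M.hmul x (m + k + 1) := by
  have hrep : List.replicate (m + k + 1) x
      = List.replicate m x ++ (x :: List.replicate k x) := by
    rw [show m + k + 1 = m + (k + 1) by omega, List.replicate_add,
      List.replicate_succ]
  intro u hu
  unfold hpow
  rw [hrep, hprod_append]
  apply Set.mem_biUnion h₁
  show u ∈ hprod M.hmul t₁ (x :: List.replicate k x)
  simp only [hprod]
  have : u ∈ ⋃ t ∈ hprod M.hmul x (List.replicate k x), M.hmul t₁ t :=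
    Set.mem_biUnion h₂ hu
  rwa [mul_hprod] at this

lemma hpow_succ_subset {P : Set H} (hP : IsIdeal M.hmul P) {x : H} {n : ℕ}
    (h : hpow M.hmul x n ⊆ P) : hpow M.hmul x (n + 1) ⊆ P := by
  unfold hpow
  rw [List.replicate_succ', hprod_append]
  intro u hu
  simp only [Set.mem_iUnion] at hu
  obtain ⟨t, ht, hu⟩ := hu
  simp only [hprod, Set.mem_iUnion] at hu
  obtain ⟨s, hs, hu⟩ := hu
  subst hu
  have : M.hmul t x ⊆ P := by
    rw [M.hmul_comm]
    exact hP.2.2 x t (h ht)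
  exact this hs

lemma hpow_mono_subset {P : Set H} (hP : IsIdeal M.hmul P) {x : H} {n m : ℕ}
    (hnm : n ≤ m) (h : hpow M.hmul x n ⊆ P) : hpow M.hmul x m ⊆ P := by
  induction m with
  | zero => simpa [Nat.le_zero.mp hnm] using h
  | succ m ih =>
    rcases Nat.lt_or_ge n (m + 1) with h' | h'
    · exact hpow_succ_subset M hP (ih (Nat.lt_succ_iff.mp h'))
    · have : n = m + 1 := le_antisymm hnm h'
      subst this; exact h

/-- From sdf-absorbing and `P ≠ {0}`: squares in `P` force membership. -/
lemma aux_sq_mem {P : Set H} (hP0 : P ≠ ({0} : Set H))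
    (hsdf : IsSdf M.hmul P) {y : H} (hy : sq M.hmul y ⊆ P) : y ∈ P := by
  obtain ⟨hI, _, hs⟩ := hsdf
  by_cases hy0 : y = 0
  · subst hy0; exact hI.1
  · have : ∃ a ∈ P, a ≠ 0 := by
      by_contra hcon
      push_neg at hcon
      apply hP0
      exact Set.eq_singleton_iff_unique_mem.mpr ⟨hI.1, fun a ha => hcon a ha⟩
    obtain ⟨a, haP, ha0⟩ := this
    have hsub : sq M.hmul y - sq M.hmul a ⊆ P := by
      intro u hu
      rw [Set.mem_sub] at hu
      obtain ⟨t, ht, s, hs', rfl⟩ := hu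
      exact hI.2.1 t (hy ht) s (hI.2.2 a a haP hs')
    have hna : -a ∈ P := by
      have := hI.2.1 0 hI.1 a haP
      simpa using this
    rcases hs y a hy0 ha0 hsub with h | h
    · have := hI.2.1 (y - a) h (-a) hna
      simpa using this
    · have := hI.2.1 (y + a) h a haP
      simpa using this

lemma ideal_neg_mem {Q : Set H} (hQ : IsIdeal M.hmul Q) {q : H} (h : q ∈ Q) :
    -q ∈ Q := by
  have := hQ.2.1 0 hQ.1 q h
  simpa using this

lemma ideal_add_mem {Q : Set H} (hQ : IsIdeal M.hmul Q) {a b : H}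
    (ha : a ∈ Q) (hb : b ∈ Q) : a + b ∈ Q := by
  have := hQ.2.1 a ha (-b) (ideal_neg_mem M hQ hb)
  simpa [sub_neg_eq_add] using this

lemma aux_pow_mem {P : Set H} (hP0 : P ≠ ({0} : Set H))
    (hsdf : IsSdf M.hmul P) {x : H} {n : ℕ}
    (h : hpow M.hmul x n ⊆ P) : x ∈ P := by
  induction n with
  | zero =>
    have : x ∈ hpow M.hmul x 0 := by simp [hpow, hprod]
    exact h this
  | succ n ih =>
    apply ih
    intro t ht
    apply aux_sq_mem M hP0 hsdf
    have h1 : M.hmul t t ⊆ hpow M.hmul x (n + n + 1) := mul_pow_subset M ht ht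
    have h2 : hpow M.hmul x (n + n + 1) ⊆ P :=
      hpow_mono_subset M hsdf.1 (by omega) h
    exact fun u hu => h2 (h1 hu)

/-- The ideal obtained by enlarging an ideal `Q` by an element `a`. -/
def enlarge (Q : Set H) (a : H) : Set H :=
  (AddSubgroup.closure (Q ∪ insert a (⋃ r, M.hmul r a)) : Set H)

lemma enlarge_isIdeal {Q : Set H} (hQ : IsIdeal M.hmul Q) (a : H) :
    IsIdeal M.hmul (enlarge M Q a) := by
  have hmem : ∀ s ∈ Q ∪ insert a (⋃ r, M.hmul r a), s ∈ enlarge M Q a :=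
    fun s hs => AddSubgroup.subset_closure hs
  refine ⟨AddSubgroup.zero_mem _, fun u hu v hv => AddSubgroup.sub_mem _ hu hv, ?_⟩
  intro r u hu
  refine AddSubgroup.closure_induction
    (p := fun y _ => ∀ r : H, M.hmul r y ⊆ enlarge M Q a) ?_ ?_ ?_ ?_ hu r
  · rintro y (hyQ | rfl | hy) r'
    · exact fun w hw => hmem w (Or.inl (hQ.2.2 r' y hyQ hw))
    · exact fun w hw => hmem w (Or.inr (Or.inr (Set.mem_iUnion.mpr ⟨r', hw⟩)))
    · simp only [Set.mem_iUnion] at hy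
      obtain ⟨r'', hr''⟩ := hy
      intro w hw
      obtain ⟨s, hs, hw'⟩ := (aux_assoc_mem M r' r'' a w).mp ⟨y, hr'', hw⟩
      exact hmem w (Or.inr (Or.inr (Set.mem_iUnion.mpr ⟨s, hw'⟩)))
  · intro r'
    exact fun w hw => hmem w (Or.inl (hQ.2.2 r' 0 hQ.1 hw))
  · intro y z _ _ hy hz r' w hw
    have := M.hmul_distrib r' y z hw
    rw [Set.mem_add] at this
    obtain ⟨u', hu', v', hv', rfl⟩ := this
    exact AddSubgroup.add_mem _ (hy r' hu') (hz r' hv')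
  · intro y _ hy r' w hw
    rw [M.hmul_neg, Set.mem_neg] at hw
    have h1 : -w ∈ AddSubgroup.closure (Q ∪ insert a (⋃ r, M.hmul r a)) :=
      hy r' hw
    have h2 := AddSubgroup.neg_mem _ h1
    rw [neg_neg] at h2
    exact h2

lemma self_mem_enlarge (Q : Set H) (a : H) : a ∈ enlarge M Q a :=
  AddSubgroup.subset_closure (Or.inr (Or.inl rfl))

lemma subset_enlarge (Q : Set H) (a : H) : Q ⊆ enlarge M Q a :=
  fun _ h => AddSubgroup.subset_closure (Or.inl h)

/-- Key: if `a ∘ b ⊆ Q`, hypermultiplying an element of `enlarge Q a` by `b`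
lands in `Q`. -/
lemma enlarge_mul_gen {Q : Set H} (hQ : IsIdeal M.hmul Q) {a b : H}
    (hab : M.hmul a b ⊆ Q) {u : H} (hu : u ∈ enlarge M Q a) :
    M.hmul u b ⊆ Q := by
  refine AddSubgroup.closure_induction
    (p := fun y _ => M.hmul y b ⊆ Q) ?_ ?_ ?_ ?_ hu
  · rintro y (hyQ | rfl | hy)
    · show M.hmul y b ⊆ Q
      rw [M.hmul_comm]; exact hQ.2.2 b y hyQ
    · exact hab
    · simp only [Set.mem_iUnion] at hy
      obtain ⟨r, hr⟩ := hy
      intro w hw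
      -- w ∈ y ∘ b with y ∈ r ∘ a; so w ∈ (r∘a)∘b = r∘(a∘b)
      obtain ⟨t, ht, hw'⟩ := (aux_assoc_mem M r a b w).mpr ⟨y, hr, hw⟩
      exact hQ.2.2 r t (hab ht) hw'
  · show M.hmul 0 b ⊆ Q
    rw [M.hmul_comm]; exact hQ.2.2 b 0 hQ.1
  · intro y z _ _ hy hz w hw
    rw [M.hmul_comm] at hw
    have := M.hmul_distrib b y z hw
    rw [Set.mem_add] at this
    obtain ⟨u', hu', v', hv', rfl⟩ := this
    rw [M.hmul_comm b y] at hu'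
    rw [M.hmul_comm b z] at hv'
    exact ideal_add_mem M hQ (hy hu') (hz hv')
  · intro y _ hy w hw
    rw [M.hmul_comm, M.hmul_neg, Set.mem_neg, M.hmul_comm] at hw
    have := ideal_neg_mem M hQ (hy hw)
    simpa using this

lemma enlarge_mul_enlarge {Q : Set H} (hQ : IsIdeal M.hmul Q) {a b : H}
    (hab : M.hmul a b ⊆ Q) {t₁ t₂ : H}
    (h₁ : t₁ ∈ enlarge M Q a) (h₂ : t₂ ∈ enlarge M Q b) :
    M.hmul t₁ t₂ ⊆ Q := by
  refine AddSubgroup.closure_induction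
    (p := fun y _ => M.hmul t₁ y ⊆ Q) ?_ ?_ ?_ ?_ h₂
  · rintro y (hyQ | rfl | hy)
    · exact hQ.2.2 t₁ y hyQ
    · exact enlarge_mul_gen M hQ hab h₁
    · simp only [Set.mem_iUnion] at hy
      obtain ⟨r, hr⟩ := hy
      intro w hw
      -- w ∈ t₁ ∘ y with y ∈ r ∘ b
      obtain ⟨s, hs, hw'⟩ := (aux_assoc_mem M t₁ r b w).mp ⟨y, hr, hw⟩
      -- s ∈ t₁ ∘ r, w ∈ s ∘ b; rewrite via r ∘ (t₁ ∘ b)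
      obtain ⟨s', hs', hw''⟩ := (aux_assoc_mem M r t₁ b w).mpr
        ⟨s, by rwa [M.hmul_comm] at hs, hw'⟩
      -- s' ∈ t₁ ∘ b ⊆ Q, w ∈ r ∘ s'
      exact hQ.2.2 r s' (enlarge_mul_gen M hQ hab h₁ hs') hw''
  · exact hQ.2.2 t₁ 0 hQ.1
  · intro y z _ _ hy hz w hw
    have := M.hmul_distrib t₁ y z hw
    rw [Set.mem_add] at this
    obtain ⟨u', hu', v', hv', rfl⟩ := this
    exact ideal_add_mem M hQ (hy hu') (hz hv')
  · intro y _ hy w hw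
    rw [M.hmul_neg, Set.mem_neg] at hw
    have := ideal_neg_mem M hQ (hy hw)
    simpa using this


end Aux

/-- a nonzero sdf-absorbing `𝒞`-hyperideal equals its radical. -/
theorem stmt0 {H : Type*} [AddCommGroup H] (M : MulHyperring H) (P : Set H)
    (hP0 : P ≠ ({0} : Set H)) (hC : Hyper.IsCIdeal M.hmul P)
    (hsdf : Hyper.IsSdf M.hmul P) :
    Hyper.rad M.hmul P = P := by
  apply Set.Subset.antisymm
  · -- rad P ⊆ P
    intro x hx
    by_contra hxP
    -- no hyperpower of x meets P
    have hdisj : ∀ n : ℕ, Disjoint (Hyper.hpow M.hmul x n) P := by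
      intro n
      rw [Set.disjoint_left]
      intro t ht htP
      have hprodx : Hyper.IsProduct M.hmul (Hyper.hpow M.hmul x n) :=
        ⟨x, List.replicate n x, rfl⟩
      have hsub : Hyper.hpow M.hmul x n ⊆ P := hC.2 _ hprodx ⟨t, ht, htP⟩
      exact hxP (aux_pow_mem M hP0 hsdf hsub)
    -- Zorn: maximal ideal containing P disjoint from all hyperpowers of x
    set S : Set (Set H) := {Q | Hyper.IsIdeal M.hmul Q ∧ P ⊆ Q ∧
      ∀ n : ℕ, Disjoint (Hyper.hpow M.hmul x n) Q} with hSdef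
    have hPS : P ∈ S := ⟨hC.1, Set.Subset.rfl, hdisj⟩
    obtain ⟨Q, hPQ, hQmax⟩ := zorn_subset_nonempty S (fun c hcS hchain hcne => by
      refine ⟨⋃₀ c, ⟨⟨?_, ?_, ?_⟩, ?_, ?_⟩, fun s hs => Set.subset_sUnion_of_mem hs⟩
      · obtain ⟨Q₀, hQ₀⟩ := hcne
        exact Set.mem_sUnion.mpr ⟨Q₀, hQ₀, (hcS hQ₀).1.1⟩
      · rintro u ⟨Q₁, hQ₁, hu⟩ v ⟨Q₂, hQ₂, hv⟩
        rcases hchain.total hQ₁ hQ₂ with h | h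
        · exact Set.mem_sUnion.mpr ⟨Q₂, hQ₂, (hcS hQ₂).1.2.1 u (h hu) v hv⟩
        · exact Set.mem_sUnion.mpr ⟨Q₁, hQ₁, (hcS hQ₁).1.2.1 u hu v (h hv)⟩
      · rintro r u ⟨Q₁, hQ₁, hu⟩
        exact fun w hw => Set.mem_sUnion.mpr ⟨Q₁, hQ₁, (hcS hQ₁).1.2.2 r u hu hw⟩
      · obtain ⟨Q₀, hQ₀⟩ := hcne
        exact (hcS hQ₀).2.1.trans (Set.subset_sUnion_of_mem hQ₀)
      · intro n
        rw [Set.disjoint_left]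
        rintro t ht ⟨Q₁, hQ₁, htQ⟩
        exact Set.disjoint_left.mp ((hcS hQ₁).2.2 n) ht htQ) P hPS
    obtain ⟨hQI, hPQ', hQdisj⟩ := hQmax.1
    have hxQ : x ∉ Q := by
      intro hxQ
      have : x ∈ Hyper.hpow M.hmul x 0 := by simp [Hyper.hpow, Hyper.hprod]
      exact Set.disjoint_left.mp (hQdisj 0) this hxQ
    -- Q is prime
    have hQprime : Hyper.IsPrime M.hmul Q := by
      refine ⟨hQI, ?_, ?_⟩
      · intro h
        exact hxQ (h ▸ Set.mem_univ x)
      · intro a b hab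
        by_contra hcon
        push_neg at hcon
        obtain ⟨haQ, hbQ⟩ := hcon
        -- enlarged ideals must meet some hyperpower
        have key : ∀ c : H, c ∉ Q → ∃ n : ℕ, ∃ t, t ∈ Hyper.hpow M.hmul x n ∧
            t ∈ enlarge M Q c := by
          intro c hcQ
          by_contra hno
          push_neg at hno
          have hmemS : enlarge M Q c ∈ S := by
            refine ⟨enlarge_isIdeal M hQI c, hPQ'.trans (subset_enlarge M Q c), ?_⟩
            intro n
            rw [Set.disjoint_left]
            intro t ht htE
            exact (hno n t ht) htE
          have := hQmax.eq_of_le hmemS (subset_enlarge M Q c)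
          exact hcQ (this ▸ self_mem_enlarge M Q c)
        obtain ⟨m, t₁, ht₁, ht₁E⟩ := key a haQ
        obtain ⟨k, t₂, ht₂, ht₂E⟩ := key b hbQ
        have hmulQ : M.hmul t₁ t₂ ⊆ Q := enlarge_mul_enlarge M hQI hab ht₁E ht₂E
        have hmulpow : M.hmul t₁ t₂ ⊆ Hyper.hpow M.hmul x (m + k + 1) :=
          mul_pow_subset M ht₁ ht₂
        obtain ⟨w, hw⟩ := M.hmul_nonempty t₁ t₂
        exact Set.disjoint_left.mp (hQdisj (m + k + 1)) (hmulpow hw) (hmulQ hw)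
    exact hxQ (hx Q ⟨hQprime, hPQ'⟩)
  · -- P ⊆ rad P
    intro p hp Q hQ
    exact hQ.2 hp
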